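/- Let (G(t₁)…(t_e), σ) be a polynomial Σ*-extension of (G, σ). Then for every g ∈ G(t₁)…(t_e): σ(g) − g ∈ G[t₁, …, t_e] if and only if g ∈ G[t₁, …, t_e]. In particular, if f, g ∈ G(t₁)…(t_e) satisfy the telescoping equation σ(g) − g = f with f ∈ G[t₁, …, t_e], then g ∈ G[t₁, …, t_e]: telescoping over polynomial summands never introduces denominators containing the sum generators tᵢ. -/

import Mathlib

set_option maxHeartbeats 1000000

open Polynomial

lemma sigma_step_core {F : Type*} [Field F] {Lf : Type*} [Field Lf]
    (σ : F ≃+* F) (G : Subfield F) (S T : Subalgebra ↥G F)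
    (ι : Lf →+* F) (σ' : Lf →+* Lf) (x : F) (β : Lf)
    (hσ'c : ∀ a, ι (σ' a) = σ (ι a))
    (hinj : ∀ p q : Polynomial Lf, eval₂ ι x p = eval₂ ι x q → p = q)
    (hβS : ι β ∈ S)
    (hstar : ∀ P : Polynomial Lf, σ (eval₂ ι x P) = eval₂ ι x ((P.map σ').comp (X + C β)))
    (hpolyT : ∀ P : Polynomial Lf, (∀ n, ι (P.coeff n) ∈ S) → eval₂ ι x P ∈ T)
    (hTrep : ∀ z ∈ T, ∃ E : Polynomial Lf, (∀ n, ι (E.coeff n) ∈ S) ∧ eval₂ ι x E = z)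
    (hconstP : ∀ Q : Polynomial Lf, σ (eval₂ ι x Q) = eval₂ ι x Q →
      ∃ b : Lf, ι b = eval₂ ι x Q)
    (hIH : ∀ b : Lf, σ (ι b) - ι b ∈ S → ι b ∈ S)
    (g : F) (hTg : σ g - g ∈ T)
    (P0 Q0 : Polynomial Lf) (hQ0 : eval₂ ι x Q0 ≠ 0)
    (hgPQ0 : g = eval₂ ι x P0 / eval₂ ι x Q0) :
    g ∈ T := by
  classical
  -- refinement to coprime monic representation
  have hQ0' : Q0 ≠ 0 := fun h => hQ0 (by simp [h])
  have hd : GCDMonoid.gcd P0 Q0 ≠ 0 := gcd_ne_zero_of_right hQ0'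
  set d := GCDMonoid.gcd P0 Q0 with hdd
  set P1 := P0 / d with hP1d
  set Q1 := Q0 / d with hQ1d
  have hcop1 : IsCoprime P1 Q1 := isCoprime_div_gcd_div_gcd hQ0'
  have hP0eq : d * P1 = P0 := EuclideanDomain.mul_div_cancel' hd (gcd_dvd_left _ _)
  have hQ0eq : d * Q1 = Q0 := EuclideanDomain.mul_div_cancel' hd (gcd_dvd_right _ _)
  have haevald : eval₂ ι x d ≠ 0 := fun h => hd (hinj d 0 (by simpa using h))
  have hQ1v : eval₂ ι x Q1 ≠ 0 := by
    intro h; apply hQ0; rw [← hQ0eq, eval₂_mul, h, mul_zero]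
  have hg1 : g = eval₂ ι x P1 / eval₂ ι x Q1 := by
    rw [hgPQ0, ← hP0eq, ← hQ0eq, eval₂_mul, eval₂_mul, mul_div_mul_left _ _ haevald]
  clear_value P1 Q1
  clear_value d
  set c := Q1.leadingCoeff with hcdef
  have hQ1ne : Q1 ≠ 0 := fun h => hQ1v (by simp [h])
  have hc : c ≠ 0 := leadingCoeff_ne_zero.mpr hQ1ne
  set P := P1 * C c⁻¹ with hPdef
  set Q := Q1 * C c⁻¹ with hQdef
  have hQM : Q.Monic := monic_mul_leadingCoeff_inv hQ1ne
  have hCcu : (C c : Polynomial Lf) * C c⁻¹ = 1 := by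
    rw [← C_mul, mul_inv_cancel₀ hc, C_1]
  clear_value c P Q
  have hcop : IsCoprime P Q := by
    obtain ⟨a, b, hab⟩ := hcop1
    refine ⟨a * C c, b * C c, ?_⟩
    calc a * C c * P + b * C c * Q = (a * P1 + b * Q1) * (C c * C c⁻¹) := by
          rw [hPdef, hQdef]; ring
      _ = 1 := by rw [hab, hCcu, one_mul]
  have hcinv : ι c⁻¹ ≠ 0 := fun h => hc (inv_eq_zero.mp (ι.injective (by rw [h, map_zero])))
  have hgPQ : g = eval₂ ι x P / eval₂ ι x Q := by
    rw [hg1, hPdef, hQdef, eval₂_mul, eval₂_mul, eval₂_C, mul_div_mul_right _ _ hcinv]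
  have hQv : eval₂ ι x Q ≠ 0 := fun h => hQM.ne_zero (hinj Q 0 (by simpa using h))
  -- the polynomial identity
  obtain ⟨Fp, hFpS, hFpv⟩ := hTrep _ hTg
  set Pc := (P.map σ').comp (X + C β) with hPc
  set Qc := (Q.map σ').comp (X + C β) with hQc
  have hQcM : Qc.Monic := (hQM.map σ').comp_X_add_C β
  have hQcv : eval₂ ι x Qc ≠ 0 := fun h => hQcM.ne_zero (hinj Qc 0 (by simpa using h))
  have hσg : σ g = eval₂ ι x Pc / eval₂ ι x Qc := by
    rw [hgPQ, map_div₀, hstar P, hstar Q, ← hPc, ← hQc]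
  have hpoly : Pc * Q = P * Qc + Fp * (Qc * Q) := by
    apply hinj
    have h1 : eval₂ ι x Pc / eval₂ ι x Qc - eval₂ ι x P / eval₂ ι x Q = eval₂ ι x Fp := by
      rw [← hσg, ← hgPQ]; exact hFpv.symm
    field_simp at h1
    rw [eval₂_mul, eval₂_add, eval₂_mul, eval₂_mul, eval₂_mul]
    linear_combination h1
  have hcopc : IsCoprime Pc Qc := by
    have h2 := (hcop.map (mapRingHom σ')).map (eval₂RingHom (C : Lf →+* Polynomial Lf) (X + C β))
    exact h2
  have hdvd1 : Qc ∣ Q := by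
    refine hcopc.symm.dvd_of_dvd_mul_right ⟨P + Fp * Q, ?_⟩
    linear_combination hpoly
  have hdvd2 : Q ∣ Qc := by
    refine hcop.symm.dvd_of_dvd_mul_right ⟨Pc - Fp * Qc, ?_⟩
    linear_combination -hpoly
  have hQQc : Q = Qc := eq_of_monic_of_associated hQM hQcM (associated_of_dvd_dvd hdvd2 hdvd1)
  have hσQv : σ (eval₂ ι x Q) = eval₂ ι x Q := by
    rw [hstar Q, ← hQc, ← hQQc]
  obtain ⟨b, hb⟩ := hconstP Q hσQv
  have hQC : Q = C b := by
    apply hinj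
    rw [eval₂_C, hb]
  have hQ1 : Q = 1 := by
    have hmb : (C b).Monic := hQC ▸ hQM
    have hb1 : b = 1 := by simpa [Monic, leadingCoeff] using hmb
    rw [hQC, hb1, C_1]
  have hgP : g = eval₂ ι x P := by rw [hgPQ, hQ1, eval₂_one, div_one]
  -- coefficients of the difference polynomial
  have hD : (P.map σ').comp (X + C β) - P = Fp := by
    apply hinj
    rw [eval₂_sub, ← hstar, ← hgP, hFpv]
  have hDcoeff : ∀ n, ι (((P.map σ').comp (X + C β) - P).coeff n) ∈ S := by
    rw [hD]; exact hFpS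
  -- top coefficient formula
  have hnat1 : (X + C β : Polynomial Lf).natDegree = 1 := natDegree_X_add_C β
  have htop : ∀ (R : Polynomial Lf) (n : ℕ), R.natDegree ≤ n →
      ((R.map σ').comp (X + C β) - R).coeff n = σ' (R.coeff n) - R.coeff n := by
    intro R n hn
    rcases lt_or_eq_of_le hn with hlt | heq
    · have hdeg : ((R.map σ').comp (X + C β)).natDegree < n := by
        rw [natDegree_comp, hnat1, mul_one, natDegree_map]; exact hlt
      rw [coeff_sub, coeff_eq_zero_of_natDegree_lt hdeg, coeff_eq_zero_of_natDegree_lt hlt,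
        map_zero, sub_zero]
    · have h1 := coeff_comp_degree_mul_degree (p := R.map σ') (q := X + C β)
        (by rw [hnat1]; exact one_ne_zero)
      rw [natDegree_map, hnat1, mul_one, leadingCoeff_map, (monic_X_add_C β).leadingCoeff,
        one_pow, mul_one] at h1
      rw [coeff_sub, ← heq, h1, Polynomial.leadingCoeff]
  -- downward induction on the degree
  have hcoeffind : ∀ (n : ℕ) (R : Polynomial Lf), R.natDegree ≤ n →
      (∀ k, ι ((((R.map σ').comp (X + C β)) - R).coeff k) ∈ S) →
      ∀ k, ι (R.coeff k) ∈ S := by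
    intro n
    induction n with
    | zero =>
      intro R hR hDc k
      have h0 : ι (R.coeff 0) ∈ S := by
        have h2 := hDc 0
        rw [htop R 0 hR, map_sub, hσ'c] at h2
        exact hIH _ h2
      rcases Nat.eq_zero_or_pos k with rfl | hk
      · exact h0
      · rw [coeff_eq_zero_of_natDegree_lt (lt_of_le_of_lt hR hk), map_zero]
        exact S.zero_mem
    | succ n IH =>
      intro R hR hDc
      have haS : ι (R.coeff (n + 1)) ∈ S := by
        have h2 := hDc (n + 1)
        rw [htop R (n + 1) hR, map_sub, hσ'c] at h2
        exact hIH _ h2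
      have hσaS : σ (ι (R.coeff (n + 1))) ∈ S := by
        have h2 := hDc (n + 1)
        rw [htop R (n + 1) hR, map_sub, hσ'c] at h2
        have h3 := S.add_mem h2 haS
        simpa using h3
      set a := R.coeff (n + 1) with hadef
      set R2 := R - C a * X ^ (n + 1) with hR2
      have hR2deg : R2.natDegree ≤ n := by
        refine natDegree_le_iff_coeff_eq_zero.mpr fun k hk => ?_
        rcases eq_or_lt_of_le (show n + 1 ≤ k by omega) with heq | hlt
        · rw [hR2, coeff_sub, coeff_C_mul, coeff_X_pow, if_pos heq.symm, mul_one, ← heq, ← hadef,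
            sub_self]
        · rw [hR2, coeff_sub, coeff_C_mul, coeff_X_pow, if_neg (by omega), mul_zero,
            coeff_eq_zero_of_natDegree_lt (lt_of_le_of_lt hR hlt), sub_zero]
      have hDlin : (R2.map σ').comp (X + C β) - R2
          = ((R.map σ').comp (X + C β) - R)
            - ((C (σ' a) * (X + C β) ^ (n + 1)) - C a * X ^ (n + 1)) := by
        rw [hR2, Polynomial.map_sub, Polynomial.map_mul, Polynomial.map_pow, map_C, map_X,
          sub_comp, mul_comp, C_comp, pow_comp, X_comp]
        ring
      have hD2 : ∀ k, ι (((R2.map σ').comp (X + C β) - R2).coeff k) ∈ S := by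
        intro k
        rw [hDlin, coeff_sub, map_sub]
        refine S.sub_mem (hDc k) ?_
        rw [coeff_sub, coeff_C_mul, coeff_C_mul, coeff_X_add_C_pow, coeff_X_pow, map_sub]
        refine S.sub_mem ?_ ?_
        · rw [map_mul, hσ'c, map_mul, map_pow, map_natCast]
          exact S.mul_mem hσaS (S.mul_mem (S.pow_mem hβS _) (S.natCast_mem _))
        · split_ifs with h
          · rw [mul_one]; exact haS
          · rw [mul_zero, map_zero]; exact S.zero_mem
      have hrec := IH R2 hR2deg hD2
      intro k
      have hcoeffk : R.coeff k = R2.coeff k + (C a * X ^ (n + 1)).coeff k := by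
        rw [hR2, coeff_sub]; ring
      rw [hcoeffk, map_add]
      refine S.add_mem (hrec k) ?_
      rw [coeff_C_mul, coeff_X_pow]
      split_ifs with h
      · rw [mul_one]; exact haS
      · rw [mul_zero, map_zero]; exact S.zero_mem
  have hfin := hcoeffind P.natDegree P le_rfl hDcoeff
  rw [hgP]
  exact hpolyT P hfin

lemma sigma_step {F : Type*} [Field F] (σ : F ≃+* F) (G : Subfield F)
    (L M : Subfield F) (S T : Subalgebra ↥G F) (x : F)
    (hx : Transcendental ↥L x)
    (hσL : ∀ a ∈ L, σ a ∈ L)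
    (hSL : ∀ z ∈ S, z ∈ L)
    (hβS : σ x - x ∈ S)
    (hM : M = Subfield.closure (↑L ∪ {x}))
    (hST : S ≤ T) (hxT : x ∈ T)
    (hTrep : ∀ z ∈ T, ∃ E : Polynomial ↥L, (∀ n, ((E.coeff n : F)) ∈ S) ∧ aeval x E = z)
    (hconst1 : ∀ c ∈ M, σ c = c → c ∈ G)
    (hGL : ∀ a ∈ G, a ∈ L)
    (hIH : ∀ g ∈ L, σ g - g ∈ S → g ∈ S) :
    ∀ g ∈ M, σ g - g ∈ T → g ∈ T := by
  classical
  intro g hg hTg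
  -- the restricted automorphism
  let σ' : ↥L →+* ↥L := (σ.toRingHom.comp L.subtype).codRestrict L.toSubring (fun a => hσL a a.2)
  have hσ'c : ∀ a : ↥L, ((σ' a : F)) = σ a := fun a => rfl
  have hinj : Function.Injective (aeval x : Polynomial ↥L → F) := by
    have h := transcendental_iff.mp hx
    intro p q hpq
    have : p - q = 0 := h _ (by simp [hpq])
    rwa [sub_eq_zero] at this
  let β : ↥L := ⟨σ x - x, hSL _ hβS⟩
  have hβc : (β : F) = σ x - x := rfl
  -- key commutation
  have hstar : ∀ P : Polynomial ↥L, σ (aeval x P) = aeval x ((P.map σ').comp (X + C β)) := by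
    intro P
    induction P using Polynomial.induction_on' with
    | add p q hp hq =>
      rw [map_add, map_add, hp, hq, Polynomial.map_add, add_comp, map_add]
    | monomial n a =>
      rw [aeval_monomial, map_mul, map_pow, Polynomial.map_monomial]
      rw [show (monomial n (σ' a)) = C (σ' a) * X ^ n from by rw [C_mul_X_pow_eq_monomial]]
      rw [mul_comp, C_comp, pow_comp, X_comp, map_mul, map_pow, aeval_C]
      have h1 : σ ((algebraMap ↥L F) a) = algebraMap ↥L F (σ' a) := rfl
      have h2 : aeval x (X + C β : Polynomial ↥L) = σ x := by
        rw [map_add, aeval_X, aeval_C]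
        show x + (β : F) = σ x
        rw [hβc]; ring
      rw [h1, h2]
  -- membership of polynomial values in M
  have hLM : ∀ a ∈ L, a ∈ M := by
    rw [hM]; intro a ha; exact Subfield.subset_closure (Or.inl ha)
  have hxM : x ∈ M := by rw [hM]; exact Subfield.subset_closure (Or.inr rfl)
  have haevalM : ∀ P : Polynomial ↥L, aeval x P ∈ M := by
    intro P
    rw [aeval_eq_sum_range]
    refine Subfield.sum_mem _ fun i _ => ?_
    rw [Algebra.smul_def]
    exact mul_mem (hLM _ (P.coeff i).2) (pow_mem hxM i)
  -- polynomials with coefficients in S land in T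
  have hpolyT : ∀ P : Polynomial ↥L, (∀ n, ((P.coeff n : F)) ∈ S) → aeval x P ∈ T := by
    intro P hP
    rw [aeval_eq_sum_range]
    refine Subalgebra.sum_mem _ fun i _ => ?_
    rw [Algebra.smul_def]
    exact mul_mem (hST (hP i)) (pow_mem hxT i)
  -- representation as quotient
  have hrep : ∀ g ∈ M, ∃ P Q : Polynomial ↥L, aeval x Q ≠ 0 ∧ g = aeval x P / aeval x Q := by
    intro g hg
    rw [hM] at hg
    induction hg using Subfield.closure_induction with
    | mem z hz =>
      rcases hz with hz | hz
      · exact ⟨C ⟨z, hz⟩, 1, by simp, by rw [map_one, div_one, aeval_C]; rfl⟩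
      · rcases hz with rfl
        exact ⟨X, 1, by simp, by simp⟩
    | one => exact ⟨1, 1, by simp, by simp⟩
    | add u v hu hv ihu ihv =>
      obtain ⟨P1, Q1, h1, e1⟩ := ihu
      obtain ⟨P2, Q2, h2, e2⟩ := ihv
      refine ⟨P1 * Q2 + P2 * Q1, Q1 * Q2, by simp [h1, h2], ?_⟩
      rw [e1, e2]
      field_simp
      simp only [map_mul, map_add]; ring
    | neg u hu ihu =>
      obtain ⟨P1, Q1, h1, e1⟩ := ihu
      exact ⟨-P1, Q1, h1, by rw [e1, map_neg, neg_div]⟩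
    | inv u hu ihu =>
      obtain ⟨P1, Q1, h1, e1⟩ := ihu
      by_cases hP : aeval x P1 = 0
      · exact ⟨0, 1, by simp, by simp [e1, hP]⟩
      · exact ⟨Q1, P1, hP, by rw [e1, inv_div]⟩
    | mul u v hu hv ihu ihv =>
      obtain ⟨P1, Q1, h1, e1⟩ := ihu
      obtain ⟨P2, Q2, h2, e2⟩ := ihv
      refine ⟨P1 * P2, Q1 * Q2, by simp [h1, h2], ?_⟩
      rw [e1, e2]
      field_simp
      simp only [map_mul]; ring
  -- conversion between eval₂ and aeval
  have hsub : L.subtype = algebraMap ↥L F := RingHom.ext fun a => rfl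
  have hAe : ∀ p : Polynomial ↥L, eval₂ L.subtype x p = aeval x p := fun p => by
    rw [aeval_def, hsub]
  obtain ⟨P0, Q0, hQ0, hgPQ0⟩ := hrep g hg
  refine sigma_step_core σ G S T L.subtype σ' x β (fun a => hσ'c a) ?_ ?_ ?_ ?_ ?_ ?_ ?_
    g hTg P0 Q0 ?_ ?_
  · intro p q h
    rw [hAe, hAe] at h
    exact hinj h
  · exact hβS
  · intro P
    rw [hAe, hAe]
    exact hstar P
  · intro P hP
    rw [hAe]
    exact hpolyT P hP
  · intro z hz
    obtain ⟨E, h1, h2⟩ := hTrep z hz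
    exact ⟨E, h1, by rw [hAe]; exact h2⟩
  · intro Q hQ
    rw [hAe] at hQ
    have hm := haevalM Q
    have hGmem := hconst1 _ hm hQ
    exact ⟨⟨_, hGL _ hGmem⟩, by rw [hAe]; rfl⟩
  · intro b hb
    exact hIH _ b.2 hb
  · rw [hAe]; exact hQ0
  · rw [hAe, hAe]; exact hgPQ0

/-- in a polynomial Σ*-extension, σ(g) - g is a polynomial in
the generators iff g is; telescoping over polynomial summands never
introduces denominators. -/
theorem stmt_11 {F : Type*} [Field F] (σ : F ≃+* F) (G : Subfield F)
    (e : ℕ) (t : Fin e → F)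
    (K : ℕ → Subfield F)
    (hK : ∀ i, K i = Subfield.closure (↑G ∪ t '' {j : Fin e | (j : ℕ) < i}))
    (hG : ∀ x, x ∈ G ↔ σ x ∈ G)
    (htrans : ∀ i : Fin e, Transcendental (↥(K (i : ℕ))) (t i))
    (hshift : ∀ i : Fin e, σ (t i) - t i ∈
      Algebra.adjoin (↥G) (t '' {j : Fin e | j < i}))
    (hconst : ∀ i : ℕ, i ≤ e → ∀ c ∈ K i, σ c = c → c ∈ G) :
    (∀ g ∈ K e, (σ g - g ∈ Algebra.adjoin (↥G) (Set.range t) ↔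
      g ∈ Algebra.adjoin (↥G) (Set.range t))) ∧
    (∀ f ∈ Algebra.adjoin (↥G) (Set.range t), ∀ g ∈ K e,
      σ g - g = f → g ∈ Algebra.adjoin (↥G) (Set.range t)) := by
  classical
  have hSmono : ∀ {m m' : ℕ}, m ≤ m' →
      (Algebra.adjoin (↥G) (t '' {j : Fin e | (j : ℕ) < m}) : Subalgebra ↥G F) ≤
      Algebra.adjoin (↥G) (t '' {j : Fin e | (j : ℕ) < m'}) :=
    fun h => Algebra.adjoin_mono (Set.image_mono fun j hj => lt_of_lt_of_le hj h)
  have hGK : ∀ m : ℕ, ∀ a ∈ G, a ∈ K m := by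
    intro m a ha; rw [hK m]; exact Subfield.subset_closure (Or.inl ha)
  have htKmem : ∀ (m : ℕ) (j : Fin e), (j : ℕ) < m → t j ∈ K m := by
    intro m j hj; rw [hK m]; exact Subfield.subset_closure (Or.inr ⟨j, hj, rfl⟩)
  have hSK : ∀ m : ℕ, ∀ z ∈ Algebra.adjoin (↥G) (t '' {j : Fin e | (j : ℕ) < m}),
      z ∈ K m := by
    intro m z hz
    induction hz using Algebra.adjoin_induction with
    | mem w hw => obtain ⟨j, hj, rfl⟩ := hw; exact htKmem m j hj
    | algebraMap r => exact hGK m r r.2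
    | add u v hu hv h1 h2 => exact add_mem h1 h2
    | mul u v hu hv h1 h2 => exact mul_mem h1 h2
  have hshift' : ∀ j : Fin e, σ (t j) - t j ∈
      Algebra.adjoin (↥G) (t '' {j' : Fin e | (j' : ℕ) < (j : ℕ)}) := fun j => hshift j
  have hσS : ∀ m : ℕ, ∀ z ∈ Algebra.adjoin (↥G) (t '' {j : Fin e | (j : ℕ) < m}),
      σ z ∈ Algebra.adjoin (↥G) (t '' {j : Fin e | (j : ℕ) < m}) := by
    intro m z hz
    induction hz using Algebra.adjoin_induction with
    | mem w hw =>
      obtain ⟨j, hj, rfl⟩ := hw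
      have h1 : σ (t j) = t j + (σ (t j) - t j) := by ring
      rw [h1]
      exact add_mem (Algebra.subset_adjoin ⟨j, hj, rfl⟩) (hSmono (le_of_lt hj) (hshift' j))
    | algebraMap r =>
      have hr : σ ↑r ∈ G := (hG ↑r).mp r.2
      exact (Algebra.adjoin (↥G) (t '' {j : Fin e | (j : ℕ) < m})).algebraMap_mem ⟨σ ↑r, hr⟩
    | add u v hu hv h1 h2 => rw [map_add]; exact add_mem h1 h2
    | mul u v hu hv h1 h2 => rw [map_mul]; exact mul_mem h1 h2
  have hσK : ∀ m : ℕ, ∀ z ∈ K m, σ z ∈ K m := by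
    intro m z hz
    rw [hK m] at hz
    rw [hK m]
    induction hz using Subfield.closure_induction with
    | mem w hw =>
      rcases hw with hw | ⟨j, hj, rfl⟩
      · exact Subfield.subset_closure (Or.inl ((hG w).mp hw))
      · have h1 : σ (t j) = t j + (σ (t j) - t j) := by ring
        rw [h1]
        refine add_mem (Subfield.subset_closure (Or.inr ⟨j, hj, rfl⟩)) ?_
        have h2 := hSK m _ (hSmono (le_of_lt hj) (hshift' j))
        rw [hK m] at h2; exact h2
    | one => rw [map_one]; exact one_mem _
    | add u v hu hv h1 h2 => rw [map_add]; exact add_mem h1 h2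
    | neg u hu h1 => rw [map_neg]; exact neg_mem h1
    | inv u hu h1 => rw [map_inv₀]; exact inv_mem h1
    | mul u v hu hv h1 h2 => rw [map_mul]; exact mul_mem h1 h2
  have main : ∀ m : ℕ, m ≤ e → ∀ g ∈ K m,
      σ g - g ∈ Algebra.adjoin (↥G) (t '' {j : Fin e | (j : ℕ) < m}) →
      g ∈ Algebra.adjoin (↥G) (t '' {j : Fin e | (j : ℕ) < m}) := by
    intro m
    induction m with
    | zero =>
      intro _ g hg _
      have hK0 : K 0 = G := by
        rw [hK 0]
        have h0 : {j : Fin e | (j : ℕ) < 0} = (∅ : Set (Fin e)) := by ext j; simp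
        rw [h0, Set.image_empty, Set.union_empty, Subfield.closure_eq]
      rw [hK0] at hg
      exact (Algebra.adjoin (↥G) _).algebraMap_mem ⟨g, hg⟩
    | succ m IH =>
      intro hm1 g hgM hgT
      have hm : m ≤ e := Nat.le_of_succ_le hm1
      have hme : m < e := hm1
      refine sigma_step σ G (K m) (K (m+1))
        (Algebra.adjoin (↥G) (t '' {j : Fin e | (j : ℕ) < m}))
        (Algebra.adjoin (↥G) (t '' {j : Fin e | (j : ℕ) < m+1})) (t ⟨m, hme⟩)
        (htrans ⟨m, hme⟩) (hσK m) (hSK m) (hshift' ⟨m, hme⟩) ?_ (hSmono (Nat.le_succ m))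
        ?_ ?_ ?_ (hGK m) (IH hm) g hgM hgT
      · -- K (m+1) = closure (↑(K m) ∪ {t ⟨m, hme⟩})
        apply le_antisymm
        · rw [hK (m+1)]
          refine Subfield.closure_le.mpr ?_
          rintro z (hz | ⟨j, hj, rfl⟩)
          · exact Subfield.subset_closure (Or.inl (hGK m z hz))
          · rcases Nat.lt_succ_iff_lt_or_eq.mp hj with hj' | hj'
            · exact Subfield.subset_closure (Or.inl (htKmem m j hj'))
            · have hji : j = ⟨m, hme⟩ := Fin.ext hj'
              rw [hji]
              exact Subfield.subset_closure (Or.inr rfl)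
        · refine Subfield.closure_le.mpr ?_
          rintro z (hz | rfl)
          · rw [hK m] at hz; rw [hK (m+1)]
            exact Subfield.closure_mono
              (Set.union_subset_union_right _
                (Set.image_mono fun j hj => Nat.lt_succ_of_lt hj)) hz
          · exact htKmem (m+1) ⟨m, hme⟩ (Nat.lt_succ_self m)
      · exact Algebra.subset_adjoin ⟨⟨m, hme⟩, Nat.lt_succ_self m, rfl⟩
      · -- hTrep
        intro z hz
        induction hz using Algebra.adjoin_induction with
        | mem w hw =>
          obtain ⟨j, hj, rfl⟩ := hw
          rcases Nat.lt_succ_iff_lt_or_eq.mp hj with hj' | hj'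
          · refine ⟨Polynomial.C ⟨t j, htKmem m j hj'⟩, ?_, by rw [Polynomial.aeval_C]; rfl⟩
            intro n
            rw [Polynomial.coeff_C]
            split_ifs
            · exact Algebra.subset_adjoin ⟨j, hj', rfl⟩
            · simpa using
                (Algebra.adjoin (↥G) (t '' {j : Fin e | (j : ℕ) < m})).zero_mem
          · have hji : j = ⟨m, hme⟩ := Fin.ext hj'
            refine ⟨Polynomial.X, ?_, by rw [Polynomial.aeval_X, ← hji]⟩
            intro n
            rw [Polynomial.coeff_X]
            split_ifs
            · simpa using
                (Algebra.adjoin (↥G) (t '' {j : Fin e | (j : ℕ) < m})).one_mem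
            · simpa using
                (Algebra.adjoin (↥G) (t '' {j : Fin e | (j : ℕ) < m})).zero_mem
        | algebraMap r =>
          refine ⟨Polynomial.C ⟨↑r, hGK m ↑r r.2⟩, ?_, by rw [Polynomial.aeval_C]; rfl⟩
          intro n
          rw [Polynomial.coeff_C]
          split_ifs
          · exact (Algebra.adjoin (↥G) (t '' {j : Fin e | (j : ℕ) < m})).algebraMap_mem r
          · simpa using
              (Algebra.adjoin (↥G) (t '' {j : Fin e | (j : ℕ) < m})).zero_mem
        | add u v hu hv h1 h2 =>
          obtain ⟨E1, c1, v1⟩ := h1; obtain ⟨E2, c2, v2⟩ := h2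
          refine ⟨E1 + E2, ?_, by rw [map_add, v1, v2]⟩
          intro n
          rw [Polynomial.coeff_add]
          push_cast
          exact add_mem (c1 n) (c2 n)
        | mul u v hu hv h1 h2 =>
          obtain ⟨E1, c1, v1⟩ := h1; obtain ⟨E2, c2, v2⟩ := h2
          refine ⟨E1 * E2, ?_, by rw [map_mul, v1, v2]⟩
          intro n
          rw [Polynomial.coeff_mul]
          push_cast
          exact Subalgebra.sum_mem _ fun p _ => mul_mem (c1 p.1) (c2 p.2)
      · -- hconst1
        intro c hc hfix
        exact hconst (m+1) hm1 c hc hfix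
  have hre : Algebra.adjoin (↥G) (Set.range t)
      = Algebra.adjoin (↥G) (t '' {j : Fin e | (j : ℕ) < e}) := by
    congr 1
    rw [show {j : Fin e | (j : ℕ) < e} = Set.univ from by ext j; simp [j.isLt], Set.image_univ]
  constructor
  · intro g hg
    constructor
    · intro h
      rw [hre]
      exact main e le_rfl g hg (by rw [← hre]; exact h)
    · intro h
      have h1 : σ g ∈ Algebra.adjoin (↥G) (Set.range t) := by
        rw [hre] at h ⊢
        exact hσS e g h
      exact sub_mem h1 h
  · intro f hf g hg heq
    rw [hre]
    refine main e le_rfl g hg ?_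
    rw [← hre, heq]; exact hf
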